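/- Let D : R → R be a k-derivation with D(t) ∈ tR. Then there exists a k-derivation D̃ : A → A extending D, i.e. such that D̃(ι(r)) = ι(D(r)) for all r ∈ R, where ι : R → A is the structure map; moreover D̃ can be chosen so that D̃(x̄) ∈ x̄·A and D̃(ȳ) ∈ ȳ·A, where x̄ and ȳ denote the classes of x and y in A. -/

import Mathlib

noncomputable section

/-- The ideal `(xy − t)` of `R[[x,y]]`, where `R[[x,y]]` is formalized as
`MvPowerSeries (Fin 2) R` with `x` the variable `0` and `y` the variable `1`. -/
def nodeIdeal (R : Type*) [CommRing R] (t : R) : Ideal (MvPowerSeries (Fin 2) R) :=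
  Ideal.span
    {(MvPowerSeries.X 0 : MvPowerSeries (Fin 2) R) * MvPowerSeries.X 1 -
      (MvPowerSeries.C : R →+* MvPowerSeries (Fin 2) R) t}

/-- The complete local model `A = R[[x,y]]/(xy − t)` of a one-parameter smoothing
of a node. -/
abbrev NodeAlgebra (R : Type*) [CommRing R] (t : R) : Type _ :=
  MvPowerSeries (Fin 2) R ⧸ nodeIdeal R t

/-!
STATEMENT 6 (Example 4.4 of the paper, extension step).

Let `k` be a commutative ring, `R` a commutative `k`-algebra in which `2` is invertible,
`t ∈ R` and `A = R[[x,y]]/(xy − t)`.  Every `k`-derivation `D : R → R` with `D(t) ∈ tR`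
extends to a `k`-derivation `D̃` of `A` (i.e. `D̃(ι r) = ι(D r)` for the structure map
`ι : R → A`), which may moreover be chosen so that `D̃(x̄) ∈ x̄·A` and `D̃(ȳ) ∈ ȳ·A`.
-/

namespace Stmt6Aux

open MvPowerSeries Finset

variable {k R : Type*} [CommRing k] [CommRing R] [Algebra k R]

def L (D : Derivation k R R) (c : R) :
    MvPowerSeries (Fin 2) R →ₗ[k] MvPowerSeries (Fin 2) R where
  toFun f := fun m => D (f m) + (m 0 + m 1) • (c * f m)
  map_add' f g := by
    funext m
    show D (f m + g m) + (m 0 + m 1) • (c * (f m + g m)) =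
      (D (f m) + (m 0 + m 1) • (c * f m)) + (D (g m) + (m 0 + m 1) • (c * g m))
    rw [map_add, mul_add, smul_add]
    ring
  map_smul' a f := by
    funext m
    show D (a • f m) + (m 0 + m 1) • (c * a • f m) =
      a • (D (f m) + (m 0 + m 1) • (c * f m))
    rw [D.map_smul, smul_add, mul_smul_comm, smul_comm (m 0 + m 1) a]

theorem coeff_L (D : Derivation k R R) (c : R) (f : MvPowerSeries (Fin 2) R)
    (m : Fin 2 →₀ ℕ) :
    MvPowerSeries.coeff m (L D c f) =
      D (MvPowerSeries.coeff m f) + (m 0 + m 1) • (c * MvPowerSeries.coeff m f) :=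
  rfl

/-- `L D c` as a derivation on `R[[x,y]]`. -/
def DP (D : Derivation k R R) (c : R) :
    Derivation k (MvPowerSeries (Fin 2) R) (MvPowerSeries (Fin 2) R) where
  toLinearMap := L D c
  map_one_eq_zero' := by
    classical
    ext m
    rw [coeff_L, coeff_one]
    rcases eq_or_ne m 0 with rfl | h
    · simp
    · simp [h]
  leibniz' f g := by
    classical
    ext m
    rw [coeff_L, coeff_mul, map_sum, Finset.mul_sum, Finset.smul_sum]
    rw [show f • L D c g + g • L D c f = f * L D c g + L D c f * g by
      rw [smul_eq_mul, smul_eq_mul, mul_comm g]]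
    rw [map_add, coeff_mul, coeff_mul, ← Finset.sum_add_distrib, ← Finset.sum_add_distrib]
    refine Finset.sum_congr rfl fun p hp => ?_
    have hm : p.1 + p.2 = m := Finset.HasAntidiagonal.mem_antidiagonal.mp hp
    rw [coeff_L, coeff_L, D.leibniz, smul_eq_mul, smul_eq_mul, ← hm]
    simp only [Finsupp.add_apply, nsmul_eq_mul]
    push_cast
    ring

variable (D : Derivation k R R) (c : R)

theorem L_C (r : R) : L D c ((MvPowerSeries.C : R →+* MvPowerSeries (Fin 2) R) r) = (MvPowerSeries.C : R →+* MvPowerSeries (Fin 2) R) (D r) := by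
  classical
  ext m
  rw [coeff_L, coeff_C, coeff_C]
  rcases eq_or_ne m 0 with rfl | h
  · simp
  · simp [h]

theorem L_X (i : Fin 2) :
    L D c (MvPowerSeries.X i) = (MvPowerSeries.C : R →+* MvPowerSeries (Fin 2) R) c * MvPowerSeries.X i := by
  classical
  ext m
  rw [coeff_L, coeff_C_mul, coeff_X]
  rcases eq_or_ne m (Finsupp.single i 1) with rfl | h
  · have : Finsupp.single i 1 0 + Finsupp.single i 1 1 = 1 := by
      fin_cases i <;> simp [Finsupp.single_apply]
    simp [this]
  · simp [h]

theorem L_node (t s : R) (hs : s * t = D t) (h2c : c + c = s) :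
    L D c (MvPowerSeries.X 0 * MvPowerSeries.X 1 - (MvPowerSeries.C : R →+* MvPowerSeries (Fin 2) R) t) =
      (MvPowerSeries.C : R →+* MvPowerSeries (Fin 2) R) s *
        (MvPowerSeries.X 0 * MvPowerSeries.X 1 - (MvPowerSeries.C : R →+* MvPowerSeries (Fin 2) R) t) := by
  classical
  have hXX : (MvPowerSeries.X 0 * MvPowerSeries.X 1 : MvPowerSeries (Fin 2) R) =
      monomial (Finsupp.single 0 1 + Finsupp.single 1 1) 1 := by
    rw [X_def, X_def, monomial_mul_monomial, one_mul]
  set E : Fin 2 →₀ ℕ := Finsupp.single 0 1 + Finsupp.single 1 1 with hE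
  have hE0 : E 0 = 1 := by simp [hE, Finsupp.single_apply]
  have hE1 : E 1 = 1 := by simp [hE, Finsupp.single_apply]
  have hEne : E ≠ 0 := by
    intro h
    have := congrArg (fun f : Fin 2 →₀ ℕ => f 0) h
    simp [hE0] at this
  ext m
  rw [coeff_L, coeff_C_mul, map_sub, map_sub, hXX, coeff_monomial, coeff_C]
  rcases eq_or_ne m E with rfl | h
  · rw [if_pos rfl, if_neg hEne]
    simp only [sub_zero, map_one, hE0, hE1]
    rw [show (1 + 1 : ℕ) • (c * 1) = c + c by simp [two_smul], h2c]
    simp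
  · rw [if_neg h]
    rcases eq_or_ne m 0 with rfl | h0
    · simp [hs.symm]
    · simp [h0]

theorem DP_apply (f : MvPowerSeries (Fin 2) R) :
    DP D c f = L D c f := rfl

end Stmt6Aux

theorem stmt6 (k R : Type*) [CommRing k] [CommRing R] [Algebra k R]
    (h2 : IsUnit (2 : R)) (t : R)
    (D : Derivation k R R) (hD : D t ∈ Ideal.span ({t} : Set R)) :
    ∃ Dt : Derivation k (NodeAlgebra R t) (NodeAlgebra R t),
      (∀ r : R, Dt (algebraMap R (NodeAlgebra R t) r) = algebraMap R (NodeAlgebra R t) (D r)) ∧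
      Dt (Ideal.Quotient.mk (nodeIdeal R t) (MvPowerSeries.X 0)) ∈
        Ideal.span {Ideal.Quotient.mk (nodeIdeal R t) (MvPowerSeries.X 0)} ∧
      Dt (Ideal.Quotient.mk (nodeIdeal R t) (MvPowerSeries.X 1)) ∈
        Ideal.span {Ideal.Quotient.mk (nodeIdeal R t) (MvPowerSeries.X 1)} := by
  classical
  obtain ⟨s, hs⟩ := Ideal.mem_span_singleton'.mp hD
  set c : R := s * ↑h2.unit⁻¹ with hc
  have h2c : c + c = s := by
    have h1 : (2 : R) * ↑h2.unit⁻¹ = 1 := h2.mul_val_inv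
    calc c + c = s * ((2 : R) * ↑h2.unit⁻¹) := by rw [hc]; ring
    _ = s := by rw [h1, mul_one]
  set P := MvPowerSeries (Fin 2) R with hP
  set e : P := MvPowerSeries.X 0 * MvPowerSeries.X 1 - (MvPowerSeries.C : R →+* MvPowerSeries (Fin 2) R) t with he
  have hLI : ∀ p ∈ nodeIdeal R t, Stmt6Aux.L D c p ∈ nodeIdeal R t := by
    intro p hp
    rw [nodeIdeal, Ideal.mem_span_singleton] at hp
    obtain ⟨q, rfl⟩ := hp
    rw [nodeIdeal, Ideal.mem_span_singleton]
    have h := (Stmt6Aux.DP D c).leibniz e q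
    simp only [Stmt6Aux.DP_apply, smul_eq_mul] at h
    refine ⟨Stmt6Aux.L D c q + q * (MvPowerSeries.C : R →+* MvPowerSeries (Fin 2) R) s, ?_⟩
    rw [h, Stmt6Aux.L_node D c t s hs h2c]
    ring
  let Mk : P →ₗ[k] NodeAlgebra R t := (Ideal.Quotient.mkₐ k (nodeIdeal R t)).toLinearMap
  have hker : (nodeIdeal R t).restrictScalars k ≤
      LinearMap.ker (Mk ∘ₗ Stmt6Aux.L D c) := by
    intro p hp
    simp only [LinearMap.mem_ker, LinearMap.comp_apply]
    exact Ideal.Quotient.eq_zero_iff_mem.mpr (hLI p hp)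
  let Dlin : NodeAlgebra R t →ₗ[k] NodeAlgebra R t :=
    (Submodule.liftQ ((nodeIdeal R t).restrictScalars k) (Mk ∘ₗ Stmt6Aux.L D c) hker) ∘ₗ
      (Submodule.Quotient.restrictScalarsEquiv k (nodeIdeal R t)).symm.toLinearMap
  have hDlin : ∀ p : P, Dlin (Ideal.Quotient.mk (nodeIdeal R t) p) =
      Ideal.Quotient.mk (nodeIdeal R t) (Stmt6Aux.L D c p) := by
    intro p
    show (Submodule.liftQ ((nodeIdeal R t).restrictScalars k) (Mk ∘ₗ Stmt6Aux.L D c) hker)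
      ((Submodule.Quotient.restrictScalarsEquiv k (nodeIdeal R t)).symm
        (Submodule.Quotient.mk p)) = _
    rw [Submodule.Quotient.restrictScalarsEquiv_symm_mk, Submodule.liftQ_apply]
    rfl
  refine ⟨{ toLinearMap := Dlin, map_one_eq_zero' := ?_, leibniz' := ?_ }, ?_, ?_, ?_⟩
  · show Dlin 1 = 0
    have h1 : (1 : NodeAlgebra R t) = Ideal.Quotient.mk (nodeIdeal R t) 1 := rfl
    have h2' : Stmt6Aux.L D c 1 = 0 := (Stmt6Aux.DP D c).map_one_eq_zero
    rw [h1, hDlin, h2', map_zero]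
  · intro a b
    obtain ⟨p, rfl⟩ := Ideal.Quotient.mk_surjective a
    obtain ⟨q, rfl⟩ := Ideal.Quotient.mk_surjective b
    show Dlin _ = _ • Dlin _ + _ • Dlin _
    have h := (Stmt6Aux.DP D c).leibniz p q
    simp only [Stmt6Aux.DP_apply, smul_eq_mul] at h
    rw [← map_mul, hDlin, hDlin, hDlin, smul_eq_mul, smul_eq_mul, h, map_add, map_mul, map_mul]
  · intro r
    have halg : algebraMap R (NodeAlgebra R t) r =
        Ideal.Quotient.mk (nodeIdeal R t) ((MvPowerSeries.C : R →+* MvPowerSeries (Fin 2) R) r) := rfl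
    have halg' : algebraMap R (NodeAlgebra R t) (D r) =
        Ideal.Quotient.mk (nodeIdeal R t) ((MvPowerSeries.C : R →+* MvPowerSeries (Fin 2) R) (D r)) := rfl
    show Dlin _ = _
    rw [halg, halg', hDlin, Stmt6Aux.L_C]
  · show Dlin _ ∈ _
    rw [hDlin, Stmt6Aux.L_X, map_mul]
    exact Ideal.mem_span_singleton'.mpr ⟨_, rfl⟩
  · show Dlin _ ∈ _
    rw [hDlin, Stmt6Aux.L_X, map_mul]
    exact Ideal.mem_span_singleton'.mpr ⟨_, rfl⟩
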